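/- Let A be an n×n real symmetric positive definite matrix, Q an n×k real matrix, q_{k+1} ∈ ℝⁿ, β_{k+1} ∈ ℝ, and T a k×k real symmetric tridiagonal matrix such that A·Q = Q·T + β_{k+1}·q_{k+1}·e_kᵀ and the n×(k+1) matrix [Q, q_{k+1}] has orthonormal columns. Let x ∈ ℝⁿ be nonzero with Q·e₁ = x/‖x‖. Then T is invertible, and with y_k := ‖x‖ · Q·T⁻¹·e₁, for every real polynomial p of degree less than k and every real D such that |p(λ) − 1/λ| ≤ D for every eigenvalue λ of A, one has ‖A⁻¹x − y_k‖ ≤ √(λmax(A)/λmin(A)) · D · ‖x‖. -/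

import Mathlib

open Matrix Polynomial Set

/-- Euclidean norm of a vector in `ℝⁿ`. -/
noncomputable def vecNorm {n : ℕ} (v : Fin n → ℝ) : ℝ :=
  Real.sqrt (∑ i, v i ^ 2)

/-- Spectral (operator) norm of a real matrix. -/
noncomputable def matNorm {m n : ℕ} (A : Matrix (Fin m) (Fin n) ℝ) : ℝ :=
  sSup {c : ℝ | ∃ v : Fin n → ℝ, vecNorm v ≤ 1 ∧ c = vecNorm (A.mulVec v)}

/-- Largest eigenvalue of a square real matrix. -/
noncomputable def lmax {n : ℕ} (A : Matrix (Fin n) (Fin n) ℝ) : ℝ :=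
  sSup {μ : ℝ | ∃ v : Fin n → ℝ, v ≠ 0 ∧ A.mulVec v = μ • v}

/-- Smallest eigenvalue of a square real matrix. -/
noncomputable def lmin {n : ℕ} (A : Matrix (Fin n) (Fin n) ℝ) : ℝ :=
  sInf {μ : ℝ | ∃ v : Fin n → ℝ, v ≠ 0 ∧ A.mulVec v = μ • v}

/-- A matrix is tridiagonal if `T i j = 0` whenever `|i - j| > 1`. -/
def IsTridiagonal {k : ℕ} (T : Matrix (Fin k) (Fin k) ℝ) : Prop :=
  ∀ i j : Fin k, 1 < |(i : ℤ) - (j : ℤ)| → T i j = 0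

namespace LZ

open Matrix Polynomial

lemma vecNorm_def {n : ℕ} (v : Fin n → ℝ) :
    Real.sqrt (∑ i, v i ^ 2) = Real.sqrt (v ⬝ᵥ v) := by
  simp [dotProduct, sq]

lemma dot_self_nonneg {n : ℕ} (v : Fin n → ℝ) : 0 ≤ v ⬝ᵥ v :=
  Finset.sum_nonneg fun i _ => mul_self_nonneg _

lemma dmv {m n : ℕ} (M : Matrix (Fin m) (Fin n) ℝ) (v : Fin m → ℝ) (w : Fin n → ℝ) :
    v ⬝ᵥ (M *ᵥ w) = (Mᵀ *ᵥ v) ⬝ᵥ w := by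
  rw [dotProduct_mulVec, mulVec_transpose]

lemma sum_mulVec' {n k : ℕ} {ι : Type*} (s : Finset ι) (f : ι → Matrix (Fin n) (Fin k) ℝ)
    (v : Fin k → ℝ) : (∑ i ∈ s, f i) *ᵥ v = ∑ i ∈ s, (f i) *ᵥ v := by
  ext j
  simp only [mulVec, dotProduct, Matrix.sum_apply, Finset.sum_mul]
  rw [Finset.sum_comm]
  simp [mulVec, dotProduct, Finset.sum_apply]

lemma mulVec_sum {n k : ℕ} {ι : Type*} (s : Finset ι) (Q : Matrix (Fin n) (Fin k) ℝ)
    (f : ι → Fin k → ℝ) : Q *ᵥ (∑ i ∈ s, f i) = ∑ i ∈ s, Q *ᵥ f i := by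
  ext j
  simp only [mulVec, dotProduct, Finset.sum_apply, Finset.mul_sum]
  rw [Finset.sum_comm]

lemma vecMulVec_mulVec' {m k : ℕ} (u : Fin m → ℝ) (w z : Fin k → ℝ) :
    (Matrix.vecMulVec u w) *ᵥ z = (w ⬝ᵥ z) • u := by
  ext i
  simp only [Matrix.mulVec, Matrix.vecMulVec_apply, dotProduct, Pi.smul_apply,
    smul_eq_mul, Finset.sum_mul]
  exact Finset.sum_congr rfl fun l _ => by ring

lemma mul_vecMulVec {a b c : ℕ} (M : Matrix (Fin a) (Fin b) ℝ) (u : Fin b → ℝ)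
    (w : Fin c → ℝ) : M * Matrix.vecMulVec u w = Matrix.vecMulVec (M *ᵥ u) w := by
  ext i j
  simp only [Matrix.mul_apply, Matrix.vecMulVec_apply, Matrix.mulVec, dotProduct,
    Finset.sum_mul]
  exact Finset.sum_congr rfl fun l _ => by ring

lemma conj_mul {n : ℕ} {V : Matrix (Fin n) (Fin n) ℝ} (hV1 : Vᵀ * V = 1)
    (g h : Fin n → ℝ) :
    (V * Matrix.diagonal g * Vᵀ) * (V * Matrix.diagonal h * Vᵀ)
      = V * Matrix.diagonal (fun i => g i * h i) * Vᵀ := by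
  have key : ∀ X : Matrix (Fin n) (Fin n) ℝ, Vᵀ * (V * X) = X := fun X => by
    rw [← Matrix.mul_assoc, hV1, Matrix.one_mul]
  simp only [Matrix.mul_assoc]
  rw [key, ← Matrix.mul_assoc (Matrix.diagonal g), Matrix.diagonal_mul_diagonal]

lemma conj_sub {n : ℕ} (V : Matrix (Fin n) (Fin n) ℝ) (g h : Fin n → ℝ) :
    V * Matrix.diagonal g * Vᵀ - V * Matrix.diagonal h * Vᵀ
      = V * Matrix.diagonal (fun i => g i - h i) * Vᵀ := by
  ext i j
  simp only [Matrix.sub_apply, Matrix.mul_apply, Matrix.diagonal_apply, Finset.sum_mul,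
    Finset.mul_sum]
  rw [← Finset.sum_sub_distrib]
  refine Finset.sum_congr rfl fun l _ => ?_
  rw [← Finset.sum_sub_distrib]
  refine Finset.sum_congr rfl fun m _ => ?_
  by_cases hml : m = l
  · subst hml; simp; ring
  · simp [hml]

lemma conj_diag_dot {n : ℕ} (V : Matrix (Fin n) (Fin n) ℝ) (g y : Fin n → ℝ) :
    y ⬝ᵥ ((V * Matrix.diagonal g * Vᵀ) *ᵥ y) = ∑ i, g i * ((Vᵀ *ᵥ y) i) ^ 2 := by
  rw [Matrix.mul_assoc, ← mulVec_mulVec, dmv, ← mulVec_mulVec]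
  simp only [dotProduct, Matrix.mulVec_diagonal]
  exact Finset.sum_congr rfl fun i _ => by ring

lemma diagonal_sum {n : ℕ} {ι : Type*} (s : Finset ι) (f : ι → Fin n → ℝ) :
    ∑ i ∈ s, Matrix.diagonal (f i) = Matrix.diagonal (fun j => ∑ i ∈ s, f i j) := by
  ext a b
  rw [Matrix.sum_apply]
  by_cases hab : a = b
  · subst hab; simp
  · simp [Matrix.diagonal_apply_ne _ hab]

lemma diagonal_smul' {n : ℕ} (c : ℝ) (f : Fin n → ℝ) :
    Matrix.diagonal (fun j => c * f j) = c • Matrix.diagonal f := by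
  ext a b
  by_cases hab : a = b
  · subst hab; simp
  · simp [Matrix.diagonal_apply_ne _ hab]

lemma tri_pow_support {k : ℕ} (hk : 0 < k) (T : Matrix (Fin k) (Fin k) ℝ)
    (hTtri : IsTridiagonal T) :
    ∀ (j : ℕ) (i : Fin k), j < (i : ℕ) →
      ((T ^ j) *ᵥ Pi.single (⟨0, hk⟩ : Fin k) 1) i = 0 := by
  intro j
  induction j with
  | zero =>
    intro i hi
    simp only [pow_zero, Matrix.one_mulVec]
    refine Pi.single_eq_of_ne ?_ 1
    simp only [ne_eq, Fin.ext_iff, Fin.val_mk]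
    omega
  | succ j ih =>
    intro i hi
    rw [pow_succ', ← Matrix.mulVec_mulVec]
    show (fun l => T i l) ⬝ᵥ _ = 0
    rw [dotProduct]
    apply Finset.sum_eq_zero
    intro l _
    rcases lt_or_ge j (l : ℕ) with h | h
    · rw [ih l h, mul_zero]
    · rw [hTtri i l (lt_of_lt_of_le (by omega) (le_abs_self _)), zero_mul]

lemma krylov {n k : ℕ} (hk : 0 < k) (A : Matrix (Fin n) (Fin n) ℝ)
    (Q : Matrix (Fin n) (Fin k) ℝ) (qk1 : Fin n → ℝ) (β : ℝ) (T : Matrix (Fin k) (Fin k) ℝ)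
    (hTtri : IsTridiagonal T)
    (hrel : A * Q = Q * T +
      β • Matrix.vecMulVec qk1 (Pi.single (⟨k - 1, Nat.sub_lt hk Nat.one_pos⟩ : Fin k) 1)) :
    ∀ j, j < k → (A ^ j) *ᵥ (Q *ᵥ Pi.single (⟨0, hk⟩ : Fin k) 1)
      = Q *ᵥ ((T ^ j) *ᵥ Pi.single (⟨0, hk⟩ : Fin k) 1) := by
  intro j
  induction j with
  | zero => intro _; rw [pow_zero, pow_zero, Matrix.one_mulVec, Matrix.one_mulVec]
  | succ j ih =>
    intro hj
    have hzero : (Matrix.vecMulVec qk1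
        (Pi.single (⟨k - 1, Nat.sub_lt hk Nat.one_pos⟩ : Fin k) 1)) *ᵥ
        ((T ^ j) *ᵥ Pi.single (⟨0, hk⟩ : Fin k) 1) = 0 := by
      rw [vecMulVec_mulVec', single_dotProduct,
        tri_pow_support hk T hTtri j _ (by simp only [Fin.val_mk]; omega)]
      simp
    calc (A ^ (j + 1)) *ᵥ (Q *ᵥ Pi.single (⟨0, hk⟩ : Fin k) 1)
        = A *ᵥ ((A ^ j) *ᵥ (Q *ᵥ Pi.single (⟨0, hk⟩ : Fin k) 1)) := by
          rw [pow_succ', ← Matrix.mulVec_mulVec]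
      _ = (A * Q) *ᵥ ((T ^ j) *ᵥ Pi.single (⟨0, hk⟩ : Fin k) 1) := by
          rw [ih (by omega), Matrix.mulVec_mulVec]
      _ = (Q * T) *ᵥ ((T ^ j) *ᵥ Pi.single (⟨0, hk⟩ : Fin k) 1) + β • 0 := by
          rw [hrel, Matrix.add_mulVec, Matrix.smul_mulVec, hzero]
      _ = Q *ᵥ ((T ^ (j + 1)) *ᵥ Pi.single (⟨0, hk⟩ : Fin k) 1) := by
          rw [smul_zero, add_zero, pow_succ', ← Matrix.mulVec_mulVec, ← Matrix.mulVec_mulVec]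

end LZ

/-- The matrix function `f(A)` of a real symmetric matrix, defined through the
eigendecomposition `A = V Λ Vᵀ` as `V f(Λ) Vᵀ`. -/
noncomputable def matFun {n : ℕ} {A : Matrix (Fin n) (Fin n) ℝ} (hA : A.IsHermitian)
    (f : ℝ → ℝ) : Matrix (Fin n) (Fin n) ℝ :=
  (hA.eigenvectorUnitary : Matrix (Fin n) (Fin n) ℝ) * Matrix.diagonal (f ∘ hA.eigenvalues) *
    star (hA.eigenvectorUnitary : Matrix (Fin n) (Fin n) ℝ)

/-- The `i`-th Chebyshev polynomial of the first kind, shifted and stretched to the range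
`[lmin A - η, lmax A + η]`: with `r_max = lmax A + η`, `r_min = lmin A - η` and
`δ = 2 / (r_max - r_min)`, this is `y ↦ T_i (δ (y - r_min) - 1)`. -/
noncomputable def shiftedCheb {n : ℕ} (A : Matrix (Fin n) (Fin n) ℝ) (η : ℝ) (i : ℕ) :
    Polynomial ℝ :=
  (Polynomial.Chebyshev.T ℝ i).comp
    (Polynomial.C (2 / ((lmax A + η) - (lmin A - η))) *
      (Polynomial.X - Polynomial.C (lmin A - η)) - 1)

/-- Exact-arithmetic guarantee for Lanczos applied to a positive definite linear
system: `T` is invertible and, with `y_k = ‖x‖·Q·T⁻¹·e₁`, for any polynomial `p` of degree `< k`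
with `|p(λ) - 1/λ| ≤ D` at every eigenvalue `λ` of `A`,
`‖A⁻¹x - y_k‖ ≤ √(λmax(A)/λmin(A)) · D · ‖x‖`. -/
theorem lanczos_exact_linear_system_approximation
    {n k : ℕ} (hk : 0 < k)
    (A : Matrix (Fin n) (Fin n) ℝ) (Q : Matrix (Fin n) (Fin k) ℝ)
    (qk1 : Fin n → ℝ) (β : ℝ) (T : Matrix (Fin k) (Fin k) ℝ)
    (hA : A.PosDef) (hT : T.IsHermitian) (hTtri : IsTridiagonal T)
    (hrel : A * Q = Q * T +
      β • Matrix.vecMulVec qk1 (Pi.single (⟨k - 1, Nat.sub_lt hk Nat.one_pos⟩ : Fin k) 1))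
    (horth : (Matrix.fromCols Q (Matrix.replicateCol (Fin 1) qk1))ᵀ *
      Matrix.fromCols Q (Matrix.replicateCol (Fin 1) qk1) = 1)
    (x : Fin n → ℝ) (hx : x ≠ 0)
    (hq1 : Q.mulVec (Pi.single (⟨0, hk⟩ : Fin k) 1) = (vecNorm x)⁻¹ • x) :
    IsUnit T.det ∧
      ∀ (p : Polynomial ℝ), p.natDegree < k → ∀ D : ℝ,
        (∀ μ : ℝ, (∃ v : Fin n → ℝ, v ≠ 0 ∧ A.mulVec v = μ • v) → |p.eval μ - 1 / μ| ≤ D) →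
        vecNorm (A⁻¹.mulVec x -
            vecNorm x • Q.mulVec (T⁻¹.mulVec (Pi.single (⟨0, hk⟩ : Fin k) 1))) ≤
          Real.sqrt (lmax A / lmin A) * D * vecNorm x := by
  classical
  have hA' : A.IsHermitian := hA.1
  have hn : 0 < n := by
    rcases Nat.eq_zero_or_pos n with h | h
    · subst h; exact absurd (_root_.funext fun i => i.elim0) hx
    · exact h
  haveI : Nonempty (Fin n) := Fin.pos_iff_nonempty.mp hn
  have hkry := LZ.krylov hk A Q qk1 β T hTtri hrel
  -- orthonormality facts
  have hQQ : Qᵀ * Q = 1 := by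
    ext i j
    have h := congrFun (congrFun horth (Sum.inl i)) (Sum.inl j)
    simpa [Matrix.mul_apply, Matrix.fromCols, Matrix.one_apply] using h
  have hQq : Qᵀ *ᵥ qk1 = 0 := by
    ext i
    have h := congrFun (congrFun horth (Sum.inl i)) (Sum.inr 0)
    simpa [Matrix.mul_apply, Matrix.fromCols, Matrix.one_apply, Matrix.mulVec,
      dotProduct, Matrix.replicateCol] using h
  have hQinj : ∀ y : Fin k → ℝ, Q *ᵥ y = 0 → y = 0 := by
    intro y hy
    have h : (Qᵀ * Q) *ᵥ y = 0 := by
      rw [← Matrix.mulVec_mulVec, hy, Matrix.mulVec_zero]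
    rwa [hQQ, Matrix.one_mulVec] at h
  -- T = Qᵀ A Q
  have hQAQ : Qᵀ * A * Q = T := by
    have h2 : Qᵀ * Matrix.vecMulVec qk1
        (Pi.single (⟨k - 1, Nat.sub_lt hk Nat.one_pos⟩ : Fin k) 1) = 0 := by
      rw [LZ.mul_vecMulVec, hQq]
      ext i j
      simp [Matrix.vecMulVec_apply]
    rw [Matrix.mul_assoc, hrel, Matrix.mul_add, ← Matrix.mul_assoc, hQQ, Matrix.one_mul,
      Matrix.mul_smul, h2, smul_zero, add_zero]
  -- T is positive definite
  have hTpd : T.PosDef := by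
    refine Matrix.posDef_iff_dotProduct_mulVec.mpr ⟨hT, fun y hy => ?_⟩
    have hQy : Q *ᵥ y ≠ 0 := fun h => hy (hQinj y h)
    have hpos := hA.dotProduct_mulVec_pos hQy
    simp only [star_trivial] at hpos ⊢
    have he : T *ᵥ y = Qᵀ *ᵥ (A *ᵥ (Q *ᵥ y)) := by
      rw [← hQAQ, ← Matrix.mulVec_mulVec, ← Matrix.mulVec_mulVec]
    rw [he, LZ.dmv, Matrix.transpose_transpose]
    exact hpos
  have hTdet : IsUnit T.det := hTpd.det_pos.ne'.isUnit
  refine ⟨hTdet, ?_⟩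
  intro p hp D hD
  -- norms
  have hxx : 0 < x ⬝ᵥ x := by
    rcases Function.ne_iff.1 hx with ⟨i, hi⟩
    exact Finset.sum_pos' (fun j _ => mul_self_nonneg _)
      ⟨i, Finset.mem_univ i, mul_self_pos.2 hi⟩
  have hnx : 0 < vecNorm x := by
    rw [vecNorm, LZ.vecNorm_def]
    exact Real.sqrt_pos.2 hxx
  -- spectral decomposition
  set V : Matrix (Fin n) (Fin n) ℝ := (hA'.eigenvectorUnitary : Matrix (Fin n) (Fin n) ℝ)
    with hVdef
  set lam : Fin n → ℝ := hA'.eigenvalues with hlamdef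
  have hV1 : Vᵀ * V = 1 := by
    have h := Matrix.mem_unitaryGroup_iff'.mp hA'.eigenvectorUnitary.2
    rw [← Matrix.conjTranspose_eq_transpose_of_trivial, ← Matrix.star_eq_conjTranspose]
    exact h
  have hV2 : V * Vᵀ = 1 := by
    have h := Matrix.mem_unitaryGroup_iff.mp hA'.eigenvectorUnitary.2
    rw [← Matrix.conjTranspose_eq_transpose_of_trivial, ← Matrix.star_eq_conjTranspose]
    exact h
  have hspec : A = V * Matrix.diagonal lam * Vᵀ := by
    have h := hA'.spectral_theorem
    rw [← Matrix.conjTranspose_eq_transpose_of_trivial, ← Matrix.star_eq_conjTranspose]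
    simpa using h
  have hAT : Aᵀ = A := by
    rw [← Matrix.conjTranspose_eq_transpose_of_trivial]
    exact hA'
  have hAV : A * V = V * Matrix.diagonal lam := by
    rw [hspec, Matrix.mul_assoc (V * Matrix.diagonal lam), hV1, Matrix.mul_one]
  have hVA : Vᵀ * A = Matrix.diagonal lam * Vᵀ := by
    rw [hspec, ← Matrix.mul_assoc, ← Matrix.mul_assoc, hV1, Matrix.one_mul]
  have hlam_mem : ∀ i, lam i ∈ {μ : ℝ | ∃ v : Fin n → ℝ, v ≠ 0 ∧ A *ᵥ v = μ • v} := by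
    intro i
    refine ⟨V *ᵥ Pi.single i 1, ?_, ?_⟩
    · intro h
      have h2 : Vᵀ *ᵥ (V *ᵥ Pi.single i 1) = 0 := by rw [h, Matrix.mulVec_zero]
      rw [Matrix.mulVec_mulVec, hV1, Matrix.one_mulVec] at h2
      have h3 := congrFun h2 i
      simp at h3
    · have hdd : Matrix.diagonal lam *ᵥ Pi.single i 1 = lam i • (Pi.single i 1 : Fin n → ℝ) := by
        ext j
        by_cases hji : j = i <;> simp [Matrix.mulVec_diagonal, Pi.single_apply, hji]
      rw [Matrix.mulVec_mulVec, hAV, ← Matrix.mulVec_mulVec, hdd, Matrix.mulVec_smul]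
  have hmem_lam : ∀ μ : ℝ, (∃ v : Fin n → ℝ, v ≠ 0 ∧ A *ᵥ v = μ • v) → ∃ i, μ = lam i := by
    rintro μ ⟨v, hv, hAv⟩
    have hvw : V *ᵥ (Vᵀ *ᵥ v) = v := by
      rw [Matrix.mulVec_mulVec, hV2, Matrix.one_mulVec]
    have hw0 : Vᵀ *ᵥ v ≠ 0 := fun h => hv (by rw [← hvw, h, Matrix.mulVec_zero])
    have hDw : Matrix.diagonal lam *ᵥ (Vᵀ *ᵥ v) = μ • (Vᵀ *ᵥ v) := by
      have h : Vᵀ *ᵥ (A *ᵥ v) = Vᵀ *ᵥ (μ • v) := by rw [hAv]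
      rwa [Matrix.mulVec_mulVec, hVA, ← Matrix.mulVec_mulVec, Matrix.mulVec_smul] at h
    rcases Function.ne_iff.1 hw0 with ⟨i, hi⟩
    have h := congrFun hDw i
    simp only [Matrix.mulVec_diagonal, Pi.smul_apply, smul_eq_mul] at h
    exact ⟨i, (mul_right_cancel₀ hi h).symm⟩
  have hSeq : {μ : ℝ | ∃ v : Fin n → ℝ, v ≠ 0 ∧ A *ᵥ v = μ • v} = Set.range lam := by
    ext μ
    constructor
    · intro h; rcases hmem_lam μ h with ⟨i, hi⟩; exact ⟨i, hi.symm⟩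
    · rintro ⟨i, rfl⟩; exact hlam_mem i
  have hfin : (Set.range lam).Finite := Set.finite_range lam
  have hne : (Set.range lam).Nonempty := Set.range_nonempty lam
  have hlam_pos : ∀ i, 0 < lam i := fun i => hA.eigenvalues_pos i
  have hlmax_mem : lmax A ∈ Set.range lam := by
    rw [lmax, hSeq]; exact hne.csSup_mem hfin
  have hlmin_mem : lmin A ∈ Set.range lam := by
    rw [lmin, hSeq]; exact hne.csInf_mem hfin
  have hlmin_pos : 0 < lmin A := by
    rcases hlmin_mem with ⟨i, hi⟩; rw [← hi]; exact hlam_pos i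
  have hlmax_pos : 0 < lmax A := by
    rcases hlmax_mem with ⟨i, hi⟩; rw [← hi]; exact hlam_pos i
  have hle_max : ∀ i, lam i ≤ lmax A := fun i => by
    rw [lmax, hSeq]; exact le_csSup hfin.bddAbove ⟨i, rfl⟩
  have hmin_le : ∀ i, lmin A ≤ lam i := fun i => by
    rw [lmin, hSeq]; exact csInf_le hfin.bddBelow ⟨i, rfl⟩
  have hD0 : 0 ≤ D := le_trans (abs_nonneg _) (hD (lam ⟨0, hn⟩) (hlam_mem ⟨0, hn⟩))
  have hlam_ne : ∀ i, lam i ≠ 0 := fun i => (hlam_pos i).ne'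
  have hAdet : IsUnit A.det := hA.det_pos.ne'.isUnit
  -- A⁻¹ and p(A) via spectral decomposition
  have hAinv : A⁻¹ = V * Matrix.diagonal (fun i => (lam i)⁻¹) * Vᵀ := by
    apply Matrix.inv_eq_right_inv
    rw [hspec, LZ.conj_mul hV1]
    have h : (fun i => lam i * (lam i)⁻¹) = fun _ => (1 : ℝ) :=
      _root_.funext fun i => mul_inv_cancel₀ (hlam_ne i)
    rw [h, Matrix.diagonal_one, Matrix.mul_one, hV2]
  have hpow : ∀ j : ℕ, A ^ j = V * Matrix.diagonal (fun i => lam i ^ j) * Vᵀ := by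
    intro j
    induction j with
    | zero =>
      simp only [pow_zero]
      rw [Matrix.diagonal_one, Matrix.mul_one, hV2]
    | succ j ih =>
      rw [pow_succ, ih, hspec, LZ.conj_mul hV1]
      have h : (fun i => lam i ^ j * lam i) = fun i => lam i ^ (j + 1) :=
        _root_.funext fun i => (pow_succ _ _).symm
      rw [h]
  have haevalA : (Polynomial.aeval A p : Matrix (Fin n) (Fin n) ℝ)
      = V * Matrix.diagonal (fun i => Polynomial.eval (lam i) p) * Vᵀ := by
    rw [Polynomial.aeval_eq_sum_range]
    calc ∑ i ∈ Finset.range (p.natDegree + 1), p.coeff i • A ^ i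
        = ∑ i ∈ Finset.range (p.natDegree + 1),
            V * Matrix.diagonal (fun j => p.coeff i * lam j ^ i) * Vᵀ := by
          refine Finset.sum_congr rfl fun i _ => ?_
          rw [hpow i, LZ.diagonal_smul', mul_smul_comm, smul_mul_assoc]
      _ = V * (∑ i ∈ Finset.range (p.natDegree + 1),
            Matrix.diagonal (fun j => p.coeff i * lam j ^ i)) * Vᵀ := by
          rw [← Finset.sum_mul, ← Finset.mul_sum]
      _ = V * Matrix.diagonal (fun j => Polynomial.eval (lam j) p) * Vᵀ := by
          rw [LZ.diagonal_sum]
          have h : (fun j => ∑ i ∈ Finset.range (p.natDegree + 1), p.coeff i * lam j ^ i)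
              = fun j => Polynomial.eval (lam j) p :=
            _root_.funext fun j => (Polynomial.eval_eq_sum_range (lam j)).symm
          rw [h]
  set g0 : Fin n → ℝ := fun i => (lam i)⁻¹ - Polynomial.eval (lam i) p with hg0def
  have hM : A⁻¹ - (Polynomial.aeval A p : Matrix (Fin n) (Fin n) ℝ)
      = V * Matrix.diagonal g0 * Vᵀ := by
    rw [hAinv, haevalA, LZ.conj_sub]
  have hg : ∀ i, |g0 i| ≤ D := by
    intro i
    have h := hD (lam i) (hlam_mem i)
    rw [abs_sub_comm] at h
    simpa [hg0def, one_div] using h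
  have hMsymm : (V * Matrix.diagonal g0 * Vᵀ)ᵀ = V * Matrix.diagonal g0 * Vᵀ := by
    rw [Matrix.transpose_mul, Matrix.transpose_mul, Matrix.transpose_transpose,
      Matrix.diagonal_transpose, Matrix.mul_assoc]
  have hVt_dot : ∀ y : Fin n → ℝ, (Vᵀ *ᵥ y) ⬝ᵥ (Vᵀ *ᵥ y) = y ⬝ᵥ y := by
    intro y
    rw [LZ.dmv, Matrix.transpose_transpose, Matrix.mulVec_mulVec, hV2, Matrix.one_mulVec]
  -- Rayleigh quotient bounds
  have hray : ∀ y : Fin n → ℝ,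
      lmin A * (y ⬝ᵥ y) ≤ y ⬝ᵥ (A *ᵥ y) ∧ y ⬝ᵥ (A *ᵥ y) ≤ lmax A * (y ⬝ᵥ y) := by
    intro y
    have hyA : y ⬝ᵥ (A *ᵥ y) = ∑ i, lam i * ((Vᵀ *ᵥ y) i) ^ 2 := by
      conv_lhs => rw [hspec]
      exact LZ.conj_diag_dot V lam y
    have hyy : y ⬝ᵥ y = ∑ i, ((Vᵀ *ᵥ y) i) ^ 2 := by
      rw [← hVt_dot y]
      simp [dotProduct, sq]
    constructor
    · rw [hyA, hyy, Finset.mul_sum]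
      exact Finset.sum_le_sum fun i _ => mul_le_mul_of_nonneg_right (hmin_le i) (sq_nonneg _)
    · rw [hyA, hyy, Finset.mul_sum]
      exact Finset.sum_le_sum fun i _ => mul_le_mul_of_nonneg_right (hle_max i) (sq_nonneg _)
  -- abbreviations
  set e1 : Fin k → ℝ := Pi.single (⟨0, hk⟩ : Fin k) 1 with he1
  set yk : Fin n → ℝ := vecNorm x • (Q *ᵥ (T⁻¹ *ᵥ e1)) with hykdef
  set ev : Fin n → ℝ := A⁻¹ *ᵥ x - yk with hevdef
  set dv : Fin n → ℝ := A⁻¹ *ᵥ x - (Polynomial.aeval A p : Matrix (Fin n) (Fin n) ℝ) *ᵥ x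
    with hdvdef
  have hxQ : x = vecNorm x • (Q *ᵥ e1) := by
    rw [hq1, smul_smul, mul_inv_cancel₀ (ne_of_gt hnx), one_smul]
  have hTT : T * T⁻¹ = 1 := Matrix.mul_nonsing_inv T hTdet
  have hQx : Qᵀ *ᵥ x = vecNorm x • e1 := by
    conv_lhs => rw [hxQ]
    rw [Matrix.mulVec_smul, Matrix.mulVec_mulVec, hQQ, Matrix.one_mulVec]
  have hQAyk : Qᵀ *ᵥ (A *ᵥ yk) = vecNorm x • e1 := by
    rw [hykdef, Matrix.mulVec_smul, Matrix.mulVec_smul]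
    congr 1
    calc Qᵀ *ᵥ (A *ᵥ (Q *ᵥ (T⁻¹ *ᵥ e1)))
        = (Qᵀ * A * Q) *ᵥ (T⁻¹ *ᵥ e1) := by
          rw [Matrix.mulVec_mulVec, Matrix.mulVec_mulVec]
      _ = (T * T⁻¹) *ᵥ e1 := by rw [hQAQ, Matrix.mulVec_mulVec]
      _ = e1 := by rw [hTT, Matrix.one_mulVec]
  have hQr : Qᵀ *ᵥ (x - A *ᵥ yk) = 0 := by
    rw [Matrix.mulVec_sub, hQx, hQAyk, sub_self]
  have hAe : A *ᵥ ev = x - A *ᵥ yk := by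
    rw [hevdef, Matrix.mulVec_sub, Matrix.mulVec_mulVec, Matrix.mul_nonsing_inv A hAdet,
      Matrix.one_mulVec]
  -- p(A) x lies in the Krylov space
  have hu : (Polynomial.aeval A p : Matrix (Fin n) (Fin n) ℝ) *ᵥ x
      = Q *ᵥ (vecNorm x • ((Polynomial.aeval T p : Matrix (Fin k) (Fin k) ℝ) *ᵥ e1)) := by
    conv_lhs => rw [hxQ]
    rw [Matrix.mulVec_smul, Matrix.mulVec_smul]
    congr 1
    rw [Polynomial.aeval_eq_sum_range' hp, Polynomial.aeval_eq_sum_range' hp]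
    calc (∑ i ∈ Finset.range k, p.coeff i • A ^ i) *ᵥ (Q *ᵥ e1)
        = ∑ i ∈ Finset.range k, p.coeff i • (A ^ i *ᵥ (Q *ᵥ e1)) := by
          rw [LZ.sum_mulVec']
          exact Finset.sum_congr rfl fun i _ => Matrix.smul_mulVec _ _ _
      _ = ∑ i ∈ Finset.range k, p.coeff i • (Q *ᵥ (T ^ i *ᵥ e1)) := by
          refine Finset.sum_congr rfl fun i hi => ?_
          rw [hkry i (Finset.mem_range.1 hi)]
      _ = Q *ᵥ (∑ i ∈ Finset.range k, p.coeff i • (T ^ i *ᵥ e1)) := by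
          rw [LZ.mulVec_sum]
          exact Finset.sum_congr rfl fun i _ => (Matrix.mulVec_smul _ _ _).symm
      _ = Q *ᵥ ((∑ i ∈ Finset.range k, p.coeff i • T ^ i) *ᵥ e1) := by
          have h : (∑ i ∈ Finset.range k, p.coeff i • T ^ i) *ᵥ e1
              = ∑ i ∈ Finset.range k, p.coeff i • (T ^ i *ᵥ e1) := by
            rw [LZ.sum_mulVec']
            exact Finset.sum_congr rfl fun i _ => Matrix.smul_mulVec _ _ _
          rw [h]
  -- Galerkin orthogonality and optimality
  set z : Fin n → ℝ := yk - (Polynomial.aeval A p : Matrix (Fin n) (Fin n) ℝ) *ᵥ x with hzdef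
  have hz : z = Q *ᵥ (vecNorm x • (T⁻¹ *ᵥ e1)
      - vecNorm x • ((Polynomial.aeval T p : Matrix (Fin k) (Fin k) ℝ) *ᵥ e1)) := by
    rw [hzdef, hu, Matrix.mulVec_sub, Matrix.mulVec_smul, Matrix.mulVec_smul, ← hykdef]
  have hdev : dv = ev + z := by
    rw [hdvdef, hevdef, hzdef]
    abel
  have hc : ev ⬝ᵥ (A *ᵥ z) = 0 := by
    rw [LZ.dmv, hAT, hAe, hz, LZ.dmv, hQr, zero_dotProduct]
  have hc' : z ⬝ᵥ (A *ᵥ ev) = 0 := by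
    rw [LZ.dmv, hAT, dotProduct_comm]
    exact hc
  have hzz : 0 ≤ z ⬝ᵥ (A *ᵥ z) := by
    rcases eq_or_ne z 0 with h | h
    · simp [h]
    · have hpos := hA.dotProduct_mulVec_pos h
      simp only [star_trivial] at hpos
      exact hpos.le
  have hexp : dv ⬝ᵥ (A *ᵥ dv)
      = ev ⬝ᵥ (A *ᵥ ev) + (ev ⬝ᵥ (A *ᵥ z) + (z ⬝ᵥ (A *ᵥ ev) + z ⬝ᵥ (A *ᵥ z))) := by
    rw [hdev]
    simp only [Matrix.mulVec_add, dotProduct_add, add_dotProduct]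
    ring
  have h2 : ev ⬝ᵥ (A *ᵥ ev) ≤ dv ⬝ᵥ (A *ᵥ dv) := by
    rw [hexp, hc, hc']
    linarith
  -- the simple error bound for dv
  have hdv' : dv = (V * Matrix.diagonal g0 * Vᵀ) *ᵥ x := by
    rw [hdvdef, ← Matrix.sub_mulVec, hM]
  have h4 : dv ⬝ᵥ dv ≤ D ^ 2 * (x ⬝ᵥ x) := by
    have hdd : dv ⬝ᵥ dv = ∑ i, (g0 i * g0 i) * ((Vᵀ *ᵥ x) i) ^ 2 := by
      conv_lhs => rw [hdv']
      rw [LZ.dmv, hMsymm, Matrix.mulVec_mulVec, LZ.conj_mul hV1, dotProduct_comm,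
        LZ.conj_diag_dot]
    have hd2 : ∑ i, (g0 i * g0 i) * ((Vᵀ *ᵥ x) i) ^ 2
        ≤ ∑ i, D ^ 2 * ((Vᵀ *ᵥ x) i) ^ 2 := by
      refine Finset.sum_le_sum fun i _ => ?_
      refine mul_le_mul_of_nonneg_right ?_ (sq_nonneg _)
      have h := hg i
      nlinarith [abs_nonneg (g0 i), neg_abs_le (g0 i), le_abs_self (g0 i)]
    have hd3 : ∑ i, D ^ 2 * ((Vᵀ *ᵥ x) i) ^ 2 = D ^ 2 * (x ⬝ᵥ x) := by
      rw [← Finset.mul_sum]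
      congr 1
      rw [← hVt_dot x]
      simp [dotProduct, sq]
    rw [hdd]
    exact hd2.trans hd3.le
  -- combine
  have c1 := (hray ev).1
  have c3 := (hray dv).2
  have hkey : ev ⬝ᵥ ev ≤ lmax A / lmin A * D ^ 2 * (x ⬝ᵥ x) := by
    have h5 : lmin A * (ev ⬝ᵥ ev) ≤ lmax A * (D ^ 2 * (x ⬝ᵥ x)) :=
      le_trans c1 (le_trans h2 (le_trans c3 (mul_le_mul_of_nonneg_left h4 hlmax_pos.le)))
    have h6 : ev ⬝ᵥ ev ≤ lmax A * (D ^ 2 * (x ⬝ᵥ x)) / lmin A :=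
      (le_div_iff₀ hlmin_pos).2 (by linarith)
    calc ev ⬝ᵥ ev ≤ lmax A * (D ^ 2 * (x ⬝ᵥ x)) / lmin A := h6
      _ = lmax A / lmin A * D ^ 2 * (x ⬝ᵥ x) := by ring
  have hra : lmax A / lmin A * D ^ 2 * (x ⬝ᵥ x)
      = (Real.sqrt (lmax A / lmin A) * D * vecNorm x) ^ 2 := by
    rw [mul_pow, mul_pow, Real.sq_sqrt (div_nonneg hlmax_pos.le hlmin_pos.le), vecNorm,
      LZ.vecNorm_def, Real.sq_sqrt (LZ.dot_self_nonneg x)]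
  have hfinal : vecNorm ev ≤ Real.sqrt (lmax A / lmin A) * D * vecNorm x := by
    rw [vecNorm, LZ.vecNorm_def]
    have hr : Real.sqrt (lmax A / lmin A) * D * vecNorm x
        = Real.sqrt ((Real.sqrt (lmax A / lmin A) * D * vecNorm x) ^ 2) :=
      (Real.sqrt_sq (mul_nonneg (mul_nonneg (Real.sqrt_nonneg _) hD0) hnx.le)).symm
    rw [hr, ← hra]
    exact Real.sqrt_le_sqrt hkey
  exact hfinal
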